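/- Let 𝒳, 𝒴 be measurable spaces and let (X₁,Y₁),…,(X_n,Y_n) be i.i.d. random pairs valued in 𝒳 × 𝒴 such that X₁ is independent of Y₁; denote by H the law of X₁ and by G the law of Y₁. Let 1 ≤ n₋ ≤ n and let σ be a uniformly distributed random permutation of {1,…,n₋}, independent of the sample. Then the n random pairs (X₁, Y_{σ(1)}), …, (X_{n₋}, Y_{σ(n₋)}), (X_{n₋+1}, Y_{n₋+1}), …, (X_n, Y_n) are mutually independent, each with law H ⊗ G. -/

import Mathlib

open MeasureTheory ProbabilityTheory

noncomputable instance {m : ℕ} : MeasurableSpace (Equiv.Perm (Fin m)) := ⊤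

instance {m : ℕ} : MeasurableSingletonClass (Equiv.Perm (Fin m)) :=
  ⟨fun _ => MeasurableSpace.measurableSet_top⟩

/-- Extension of a permutation of `Fin m` to a permutation of `Fin n` by the identity. -/
def ShufflePerm.ext {n m : ℕ} (hle : m ≤ n) (π : Equiv.Perm (Fin m)) : Equiv.Perm (Fin n) where
  toFun i := if h : (i : ℕ) < m then Fin.castLE hle (π ⟨i, h⟩) else i
  invFun i := if h : (i : ℕ) < m then Fin.castLE hle (π.symm ⟨i, h⟩) else i
  left_inv i := by
    by_cases h : (i : ℕ) < m
    · have h2 : ((Fin.castLE hle (π ⟨i, h⟩) : Fin n) : ℕ) < m := (π ⟨i, h⟩).2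
      simp only [dif_pos h, dif_pos h2]
      have hq : (⟨((Fin.castLE hle (π ⟨i, h⟩) : Fin n) : ℕ), h2⟩ : Fin m) = π ⟨i, h⟩ := by
        ext; simp
      rw [hq, Equiv.symm_apply_apply]
      ext; simp
    · simp [h]
  right_inv i := by
    by_cases h : (i : ℕ) < m
    · have h2 : ((Fin.castLE hle (π.symm ⟨i, h⟩) : Fin n) : ℕ) < m := (π.symm ⟨i, h⟩).2
      simp only [dif_pos h, dif_pos h2]
      have hq : (⟨((Fin.castLE hle (π.symm ⟨i, h⟩) : Fin n) : ℕ), h2⟩ : Fin m) = π.symm ⟨i, h⟩ := by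
        ext; simp
      rw [hq, Equiv.apply_symm_apply]
      ext; simp
    · simp [h]

/-- `Measure.pi` of identical factors is invariant under permutation of coordinates. -/
lemma ShufflePerm.map_comp_perm {𝒴 : Type*} [MeasurableSpace 𝒴] (ν : Measure 𝒴)
    [IsProbabilityMeasure ν] {n : ℕ} (e : Equiv.Perm (Fin n)) :
    Measure.map (fun y : Fin n → 𝒴 => y ∘ e) (Measure.pi fun _ => ν)
      = Measure.pi fun _ => ν := by
  refine (Measure.pi_eq (μ := fun _ => ν) fun s hs => ?_).symm
  have hm : Measurable (fun y : Fin n → 𝒴 => y ∘ ⇑e) :=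
    measurable_pi_lambda _ fun i => by exact measurable_pi_apply (e i)
  rw [Measure.map_apply hm (MeasurableSet.univ_pi hs)]
  have hpre : (fun y : Fin n → 𝒴 => y ∘ e) ⁻¹' Set.pi Set.univ s
      = Set.pi Set.univ (fun j => s (e.symm j)) := by
    ext y
    simp only [Set.mem_preimage, Set.mem_pi, Set.mem_univ, forall_true_left, Function.comp]
    constructor
    · intro h j; have := h (e.symm j); simpa using this
    · intro h i; have := h (e i); simpa using this
  rw [hpre, Measure.pi_pi]
  exact Equiv.prod_comp e.symm fun i => ν (s i)

/-- If random variables are mutually independent, the law of the joint vector is the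
product of the marginal laws. -/
lemma ShufflePerm.map_fun_eq_pi {Ω ι β : Type*} [MeasurableSpace Ω] [Fintype ι]
    [MeasurableSpace β] (P : Measure Ω) [IsProbabilityMeasure P] (f : ι → Ω → β)
    (hf : ∀ i, Measurable (f i)) (h : iIndepFun f P) :
    Measure.map (fun ω i => f i ω) P = Measure.pi fun i => Measure.map (f i) P := by
  haveI : ∀ i, IsProbabilityMeasure (Measure.map (f i) P) :=
    fun i => Measure.isProbabilityMeasure_map (hf i).aemeasurable
  refine (Measure.pi_eq (μ := fun i => Measure.map (f i) P) fun s hs => ?_).symm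
  rw [Measure.map_apply (measurable_pi_lambda _ fun i => hf i) (MeasurableSet.univ_pi hs)]
  have hpre : (fun ω i => f i ω) ⁻¹' Set.pi Set.univ s = ⋂ i, f i ⁻¹' s i := by
    ext ω; simp [Set.mem_pi]
  rw [hpre, h.meas_iInter (fun i => ⟨s i, hs i, rfl⟩)]
  exact Finset.prod_congr rfl fun i _ => (Measure.map_apply (hf i) (hs i)).symm

/-- Conversely, if the law of the joint vector is a product of probability measures, the
random variables are mutually independent with the corresponding marginals. -/
lemma ShufflePerm.of_map_pi {Ω ι β : Type*} [MeasurableSpace Ω] [Fintype ι]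
    [MeasurableSpace β] (P : Measure Ω) [IsProbabilityMeasure P] (f : ι → Ω → β)
    (hf : ∀ i, Measurable (f i)) (μ : ι → Measure β) [∀ i, IsProbabilityMeasure (μ i)]
    (h : Measure.map (fun ω i => f i ω) P = Measure.pi μ) :
    iIndepFun f P ∧ ∀ i, Measure.map (f i) P = μ i := by
  classical
  have key : ∀ (S : Finset ι) (s : ι → Set β), (∀ i ∈ S, MeasurableSet (s i)) →
      P (⋂ i ∈ S, f i ⁻¹' s i) = ∏ i ∈ S, μ i (s i) := by
    intro S s hs
    have hmeas : MeasurableSet (Set.pi Set.univ fun i => if i ∈ S then s i else Set.univ) :=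
      MeasurableSet.univ_pi fun i => by
        by_cases hi : i ∈ S
        · simpa [hi] using hs i hi
        · simp [hi]
    have hpre : (fun ω i => f i ω) ⁻¹'
        (Set.pi Set.univ fun i => if i ∈ S then s i else Set.univ) = ⋂ i ∈ S, f i ⁻¹' s i := by
      ext ω
      simp only [Set.mem_preimage, Set.mem_pi, Set.mem_univ, forall_true_left, Set.mem_iInter]
      constructor
      · intro hω i hi; have := hω i; rwa [if_pos hi] at this
      · intro hω i
        by_cases hi : i ∈ S
        · rw [if_pos hi]; exact hω i hi
        · rw [if_neg hi]; trivial
    calc P (⋂ i ∈ S, f i ⁻¹' s i)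
        = Measure.map (fun ω i => f i ω) P
            (Set.pi Set.univ fun i => if i ∈ S then s i else Set.univ) := by
          rw [Measure.map_apply (measurable_pi_lambda _ fun i => hf i) hmeas, hpre]
      _ = ∏ i, μ i (if i ∈ S then s i else Set.univ) := by rw [h, Measure.pi_pi]
      _ = ∏ i, (if i ∈ S then μ i (s i) else 1) := by
          refine Finset.prod_congr rfl fun i _ => ?_
          by_cases hi : i ∈ S <;> simp [hi]
      _ = ∏ i ∈ S, μ i (s i) := by rw [Finset.prod_ite_mem, Finset.univ_inter]
  have hmarg : ∀ i, ∀ s : Set β, MeasurableSet s → P (f i ⁻¹' s) = μ i s := by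
    intro i s hs
    have := key {i} (fun _ => s) (fun _ _ => hs)
    simpa using this
  constructor
  · rw [iIndepFun_iff_measure_inter_preimage_eq_mul]
    intro S sets hsets
    rw [key S sets hsets]
    exact Finset.prod_congr rfl fun i hi => (hmarg i (sets i) (hsets i hi)).symm
  · intro i
    ext s hs
    rw [Measure.map_apply (hf i) hs, hmarg i s hs]

/-- Proposition 1 of the paper (splitting-and-shuffling under the null): if the pairs
`(Xᵢ, Yᵢ)` are i.i.d. with `X₁ ⊥ Y₁`, and `σ` is a uniform random permutation of
`{1,…,n₋}` independent of the sample, then the `n` pairs `(Xᵢ, Y_{σ(i)})`, `i ≤ n₋`, and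
`(Xᵢ, Yᵢ)`, `i > n₋`, are mutually independent, each with law `H ⊗ G`. -/
theorem stmt_9 {𝒳 𝒴 Ω : Type*} [MeasurableSpace 𝒳] [MeasurableSpace 𝒴] [MeasurableSpace Ω]
    (P : Measure Ω) [IsProbabilityMeasure P]
    (n nminus : ℕ) (hnminus : 1 ≤ nminus) (hle : nminus ≤ n)
    (X : Fin n → Ω → 𝒳) (Y : Fin n → Ω → 𝒴)
    (hX : ∀ i, Measurable (X i)) (hY : ∀ i, Measurable (Y i))
    (hiid_indep : iIndepFun
      (fun i ω => (X i ω, Y i ω)) P)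
    (hiid_ident : ∀ i j : Fin n, Measure.map (fun ω => (X i ω, Y i ω)) P
      = Measure.map (fun ω => (X j ω, Y j ω)) P)
    (hnull : IndepFun (X ⟨0, by omega⟩) (Y ⟨0, by omega⟩) P)
    (H : Measure 𝒳) (hH : H = Measure.map (X ⟨0, by omega⟩) P)
    (G : Measure 𝒴) (hG : G = Measure.map (Y ⟨0, by omega⟩) P)
    (σ : Ω → Equiv.Perm (Fin nminus))
    (hσ_meas : Measurable σ)
    (hσ_unif : ∀ π : Equiv.Perm (Fin nminus),
      P {ω | σ ω = π} = (Nat.factorial nminus : ENNReal)⁻¹)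
    (hσ_indep : IndepFun σ (fun ω => fun i : Fin n => (X i ω, Y i ω)) P)
    (Z : Fin n → Ω → 𝒳 × 𝒴)
    (hZ : ∀ i ω, Z i ω = if h : (i : ℕ) < nminus
      then (X i ω, Y (Fin.castLE hle (σ ω ⟨(i : ℕ), h⟩)) ω)
      else (X i ω, Y i ω)) :
    iIndepFun Z P
      ∧ ∀ i, Measure.map (Z i) P = H.prod G := by
  classical
  set V : Ω → Fin n → 𝒳 × 𝒴 := fun ω => fun i : Fin n => (X i ω, Y i ω) with hV_def
  have hVmeas : Measurable V := measurable_pi_lambda _ fun i => (hX i).prodMk (hY i)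
  have h0 : (0 : ℕ) < n := by omega
  haveI hHp : IsProbabilityMeasure H := by
    rw [hH]; exact Measure.isProbabilityMeasure_map (hX _).aemeasurable
  haveI hGp : IsProbabilityMeasure G := by
    rw [hG]; exact Measure.isProbabilityMeasure_map (hY _).aemeasurable
  have hpair : ∀ i : Fin n, Measure.map (fun ω => (X i ω, Y i ω)) P = H.prod G := by
    intro i
    rw [hiid_ident i ⟨0, h0⟩, hH, hG]
    exact (indepFun_iff_map_prod_eq_prod_map_map (hX _).aemeasurable
      (hY _).aemeasurable).mp hnull
  have hVlaw : Measure.map V P = Measure.pi (fun _ : Fin n => H.prod G) := by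
    have h1 := ShufflePerm.map_fun_eq_pi P (fun i ω => (X i ω, Y i ω))
      (fun i => (hX i).prodMk (hY i)) hiid_indep
    have h2 : (fun i : Fin n => Measure.map (fun ω => (X i ω, Y i ω)) P)
        = fun _ : Fin n => H.prod G := funext fun i => hpair i
    rw [hV_def]
    calc Measure.map (fun ω => fun i : Fin n => (X i ω, Y i ω)) P
        = Measure.pi (fun i : Fin n => Measure.map (fun ω => (X i ω, Y i ω)) P) := h1
      _ = Measure.pi (fun _ : Fin n => H.prod G) := by rw [h2]
  set φ : Equiv.Perm (Fin nminus) → (Fin n → 𝒳 × 𝒴) → (Fin n → 𝒳 × 𝒴) :=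
    fun π v i => ((v i).1, (v (ShufflePerm.ext hle π i)).2) with hφ_def
  have hφmeas : ∀ π, Measurable (φ π) := fun π => measurable_pi_lambda _ fun i =>
    ((measurable_pi_apply i).fst.prodMk (measurable_pi_apply _).snd)
  have hZeq : ∀ ω, (fun i => Z i ω) = φ (σ ω) (V ω) := by
    intro ω; funext i
    rw [hZ i ω]
    by_cases h : (i : ℕ) < nminus
    · simp [h, hφ_def, hV_def, ShufflePerm.ext]
    · simp [h, hφ_def, hV_def, ShufflePerm.ext]
  -- measure preservation of φ π
  have hφpres : ∀ π, Measure.map (φ π) (Measure.pi fun _ : Fin n => H.prod G)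
      = Measure.pi (fun _ : Fin n => H.prod G) := by
    intro π
    set A := MeasurableEquiv.arrowProdEquivProdArrow 𝒳 𝒴 (Fin n) with hA_def
    have hA := measurePreserving_arrowProdEquivProdArrow 𝒳 𝒴 (Fin n)
      (fun _ => H) (fun _ => G)
    have hcompmeas : Measurable (fun y : Fin n → 𝒴 => y ∘ ShufflePerm.ext hle π) :=
      measurable_pi_lambda _ fun i => measurable_pi_apply _
    have hPm : Measurable (Prod.map (id : (Fin n → 𝒳) → (Fin n → 𝒳))
        (fun y : Fin n → 𝒴 => y ∘ ShufflePerm.ext hle π)) :=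
      measurable_id.prodMap hcompmeas
    have hfactor : φ π = ⇑A.symm ∘ (Prod.map id (fun y => y ∘ ShufflePerm.ext hle π)) ∘ ⇑A := by
      funext v; funext i; rfl
    rw [hfactor,
      ← Measure.map_map A.symm.measurable (hPm.comp A.measurable),
      ← Measure.map_map hPm A.measurable, hA.map_eq,
      ← Measure.map_prod_map _ _ measurable_id hcompmeas,
      Measure.map_id, ShufflePerm.map_comp_perm G (ShufflePerm.ext hle π),
      (hA.symm A).map_eq]
  have hZmeas : ∀ i, Measurable (Z i) := by
    intro i
    have hrw : Z i = (fun p : (Fin n → 𝒳 × 𝒴) × Equiv.Perm (Fin nminus) => φ p.2 p.1 i)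
        ∘ (fun ω => (V ω, σ ω)) := by
      funext ω
      have := congrFun (hZeq ω) i
      simpa using this
    rw [hrw]
    exact (measurable_from_prod_countable_left
      (fun π => (measurable_pi_apply i).comp (hφmeas π))).comp (hVmeas.prodMk hσ_meas)
  have hZlaw : Measure.map (fun ω => fun i : Fin n => Z i ω) P
      = Measure.pi (fun _ : Fin n => H.prod G) := by
    have hZvecmeas : Measurable (fun ω => fun i : Fin n => Z i ω) :=
      measurable_pi_lambda _ hZmeas
    ext s hs
    rw [Measure.map_apply hZvecmeas hs]
    have hdecomp : (fun ω => fun i : Fin n => Z i ω) ⁻¹' s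
        = ⋃ π ∈ (Finset.univ : Finset (Equiv.Perm (Fin nminus))),
            (σ ⁻¹' {π} ∩ V ⁻¹' (φ π ⁻¹' s)) := by
      ext ω
      simp only [Set.mem_preimage, Set.mem_iUnion, Finset.mem_univ, Set.mem_inter_iff,
        Set.mem_singleton_iff, exists_prop, true_and]
      constructor
      · intro hmem
        exact ⟨σ ω, rfl, by rwa [← hZeq ω]⟩
      · rintro ⟨π, hπ, hmem⟩
        rw [show (fun i : Fin n => Z i ω) = φ (σ ω) (V ω) from hZeq ω, hπ]
        exact hmem
    rw [hdecomp, measure_biUnion_finset ?_ ?_]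
    · have hterm : ∀ π : Equiv.Perm (Fin nminus),
          P (σ ⁻¹' {π} ∩ V ⁻¹' (φ π ⁻¹' s))
            = (Nat.factorial nminus : ENNReal)⁻¹
                * Measure.pi (fun _ : Fin n => H.prod G) s := by
        intro π
        rw [hσ_indep.measure_inter_preimage_eq_mul _ _ (measurableSet_singleton π)
          ((hφmeas π) hs)]
        have h1 : P (σ ⁻¹' {π}) = (Nat.factorial nminus : ENNReal)⁻¹ := by
          have : σ ⁻¹' {π} = {ω | σ ω = π} := by ext ω; simp
          rw [this, hσ_unif π]
        have h2 : P (V ⁻¹' (φ π ⁻¹' s)) = Measure.pi (fun _ : Fin n => H.prod G) s := by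
          have := Measure.map_apply (μ := P) hVmeas ((hφmeas π) hs)
          rw [← this, hVlaw, ← Measure.map_apply (hφmeas π) hs, hφpres π]
        rw [h1, h2]
      calc ∑ π : Equiv.Perm (Fin nminus), P (σ ⁻¹' {π} ∩ V ⁻¹' (φ π ⁻¹' s))
          = ∑ _π : Equiv.Perm (Fin nminus), (Nat.factorial nminus : ENNReal)⁻¹
              * Measure.pi (fun _ : Fin n => H.prod G) s :=
            Finset.sum_congr rfl fun π _ => hterm π
        _ = (Fintype.card (Equiv.Perm (Fin nminus)) : ENNReal)
              * ((Nat.factorial nminus : ENNReal)⁻¹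
                * Measure.pi (fun _ : Fin n => H.prod G) s) := by
            rw [Finset.sum_const, nsmul_eq_mul]; norm_cast
        _ = Measure.pi (fun _ : Fin n => H.prod G) s := by
            rw [Fintype.card_perm, Fintype.card_fin, ← mul_assoc,
              ENNReal.mul_inv_cancel (by exact_mod_cast (Nat.factorial_pos nminus).ne')
                (ENNReal.natCast_ne_top _), one_mul]
    · intro π _ ρ _ hne
      refine Set.disjoint_left.mpr ?_
      rintro ω ⟨hπ, -⟩ ⟨hρ, -⟩
      exact hne (hπ.symm.trans hρ)
    · intro π _
      exact (hσ_meas (measurableSet_singleton π)).inter (hVmeas ((hφmeas π) hs))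
  exact ShufflePerm.of_map_pi P Z hZmeas (fun _ => H.prod G) hZlaw
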